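/- Let Γ = (V,E,s,t) be a finite connected multigraph, v₀ ∈ V, μ : V → ℝ a polarization of degree d (∑ μ = d), 𝓔 ⊆ E, and let (𝓔,D) be a pseudo-divisor of degree d: D : V ⊕ 𝓔 → ℤ with D(w) = −1 for every exceptional vertex w ∈ 𝓔 and ∑ D = d. Then D is (v₀, μ^𝓔)-quasistable on the subdivision Γ^𝓔 if and only if 𝓔 is nondisconnecting (i.e., the graph Γ_𝓔 := (V, E∖𝓔) is connected) and the divisor D|_V is (v₀, μ_𝓔)-quasistable on Γ_𝓔, where μ_𝓔(v) := μ(v) + val_𝓔(v)/2 and val_𝓔(v) := #{e ∈ 𝓔 : s e = v} + #{e ∈ 𝓔 : t e = v}. -/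

import Mathlib

noncomputable section

/-- The "step" relation of a multigraph `(V, E, s, t)`. -/
def GraphStep {V E : Type} (s t : E → V) (a b : V) : Prop := ∃ e, s e = a ∧ t e = b

/-- `b₀`: the number of connected components. -/
def b0 {V E : Type} (s t : E → V) : ℕ := Nat.card (Quot (GraphStep s t))

/-- A multigraph is connected. -/
def GraphConnected {V E : Type} (s t : E → V) : Prop := Nonempty V ∧ b0 s t = 1

/-- Vertex type of the subdivision `Γ^𝓔`. -/
abbrev SubV (V : Type) {E : Type} (𝓔 : Finset E) : Type := V ⊕ {e // e ∈ 𝓔}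

/-- Edge type of the subdivision `Γ^𝓔`. -/
abbrev SubE {E : Type} (𝓔 : Finset E) : Type := {e // e ∉ 𝓔} ⊕ ({e // e ∈ 𝓔} × Bool)

/-- Source map of the subdivision. -/
def subS {V E : Type} (s t : E → V) (𝓔 : Finset E) : SubE 𝓔 → SubV V 𝓔
  | .inl e => .inl (s e.1)
  | .inr (e, false) => .inl (s e.1)
  | .inr (e, true) => .inr e

/-- Target map of the subdivision. -/
def subT {V E : Type} (s t : E → V) (𝓔 : Finset E) : SubE 𝓔 → SubV V 𝓔
  | .inl e => .inl (t e.1)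
  | .inr (e, false) => .inr e
  | .inr (e, true) => .inl (t e.1)

/-- `δ_W`: the number of edges with exactly one endpoint in `W`. -/
def edgeDelta {V E : Type} (s t : E → V) (W : Set V) : ℕ :=
  Nat.card {e : E // (s e ∈ W ∧ t e ∉ W) ∨ (s e ∉ W ∧ t e ∈ W)}

/-- `β_D(W) := ∑_{v ∈ W} D v − ∑_{v ∈ W} μ v + δ_W / 2`. -/
def betaDiv {V E : Type} (s t : E → V) (D : V → ℤ) (μ : V → ℝ) (W : Set V) : ℝ :=
  (∑ᶠ v ∈ W, (D v : ℝ)) - (∑ᶠ v ∈ W, μ v) + (edgeDelta s t W : ℝ) / 2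

/-- `(v₀,μ)`-quasistability. -/
def Quasistable {V E : Type} (s t : E → V) (v₀ : V) (D : V → ℤ) (μ : V → ℝ) : Prop :=
  ∀ W : Set V, W ≠ Set.univ →
    0 ≤ betaDiv s t D μ W ∧ (v₀ ∈ W → 0 < betaDiv s t D μ W)

/-- `val_𝓔(v)`: the number of half-edges of `𝓔` incident to `v` (loops count twice). -/
def valIn {V E : Type} (s t : E → V) (𝓔 : Finset E) (v : V) : ℕ :=
  Nat.card {e : {e // e ∈ 𝓔} // s e.1 = v} + Nat.card {e : {e // e ∈ 𝓔} // t e.1 = v}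

/-! ### Auxiliary lemmas -/

open Finset in
open Classical in
lemma finsum_mem_set_eq {α : Type} [Fintype α] (W : Set α) (f : α → ℝ) :
    ∑ᶠ v ∈ W, f v = ∑ v, if v ∈ W then f v else 0 := by
  classical
  rw [finsum_mem_def, finsum_eq_sum_of_fintype]
  exact Finset.sum_congr rfl fun v _ => by
    by_cases h : v ∈ W <;> simp [Set.indicator, h]

open Finset in
open Classical in
lemma natCard_subtype {α : Type} [Fintype α] (p : α → Prop) :
    (Nat.card {x // p x} : ℝ) = ∑ x, if p x then (1:ℝ) else 0 := by
  classical
  rw [Nat.card_eq_fintype_card, Fintype.card_subtype, Finset.card_filter]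
  push_cast
  rfl

open Finset in
open Classical in
lemma betaDiv_eq {V' F : Type} [Fintype V'] [Fintype F] (s' t' : F → V') (D : V' → ℤ)
    (μ : V' → ℝ) (W : Set V') :
    betaDiv s' t' D μ W
      = (∑ v, if v ∈ W then (D v : ℝ) else 0) - (∑ v, if v ∈ W then μ v else 0)
        + (∑ e, if (s' e ∈ W ∧ t' e ∉ W) ∨ (s' e ∉ W ∧ t' e ∈ W) then (1:ℝ) else 0) / 2 := by
  rw [betaDiv, finsum_mem_set_eq, finsum_mem_set_eq, edgeDelta, natCard_subtype]
  congr 1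
  congr 1
  exact Finset.sum_congr rfl fun x _ => by congr

open Finset in
open Classical in
lemma sum_card_fiber {V ι : Type} [Fintype V] [Fintype ι] (f : ι → V) (A : Set V) :
    (∑ v, if v ∈ A then (Nat.card {e : ι // f e = v} : ℝ) else 0)
      = ∑ e, if f e ∈ A then (1:ℝ) else 0 := by
  classical
  have step : ∀ v, (if v ∈ A then (Nat.card {e : ι // f e = v} : ℝ) else 0)
      = ∑ e, if f e = v ∧ v ∈ A then (1:ℝ) else 0 := by
    intro v
    by_cases h : v ∈ A
    · rw [if_pos h, natCard_subtype]
      exact Finset.sum_congr rfl fun e _ => by simp [h]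
    · rw [if_neg h]
      symm
      exact Finset.sum_eq_zero fun e _ => by simp [h]
  simp_rw [step]
  rw [Finset.sum_comm]
  refine Finset.sum_congr rfl fun e _ => ?_
  have h2 : ∀ v, (if f e = v ∧ v ∈ A then (1:ℝ) else 0)
      = if v = f e then (if v ∈ A then (1:ℝ) else 0) else 0 := by
    intro v
    by_cases h1 : v = f e
    · subst h1; simp
    · have h3 : ¬ (f e = v) := fun h => h1 h.symm
      simp [h1, h3]
  simp_rw [h2]
  rw [Finset.sum_ite_eq' Finset.univ (f e) (fun v => if v ∈ A then (1:ℝ) else 0)]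
  simp

open Finset in
open Classical in
lemma sum_card_fiber_total {V ι : Type} [Fintype V] [Fintype ι] (f : ι → V) :
    (∑ v, (Nat.card {e : ι // f e = v} : ℝ)) = Fintype.card ι := by
  have h := sum_card_fiber f Set.univ
  simpa using h

/-! ### The key β-splitting identity -/

open Finset in
open Classical in
lemma beta_split {V E : Type} [Fintype V] [Fintype E] (s t : E → V) (𝓔 : Finset E)
    (D : SubV V 𝓔 → ℤ) (hexc : ∀ w : {e // e ∈ 𝓔}, D (Sum.inr w) = -1) (μ : V → ℝ)
    (A : Set V) (S : Set {e // e ∈ 𝓔}) :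
    betaDiv (subS s t 𝓔) (subT s t 𝓔) D (Sum.elim μ fun _ => 0)
        {w | Sum.elim (· ∈ A) (· ∈ S) w}
      = betaDiv (fun e : {e // e ∉ 𝓔} => s e.1) (fun e : {e // e ∉ 𝓔} => t e.1)
          (fun v => D (Sum.inl v)) (fun v => μ v + (valIn s t 𝓔 v : ℝ) / 2) A
        + ∑ e : {e // e ∈ 𝓔}, (if e ∈ S then 0
            else ((if s e.1 ∈ A then (1:ℝ) else 0) + (if t e.1 ∈ A then 1 else 0))) := by
  classical
  simp only [betaDiv_eq]
  have hD : (∑ w : SubV V 𝓔,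
        if w ∈ {w : SubV V 𝓔 | Sum.elim (· ∈ A) (· ∈ S) w} then (D w : ℝ) else 0)
      = (∑ v : V, if v ∈ A then (D (Sum.inl v) : ℝ) else 0)
        + (∑ e : {e // e ∈ 𝓔}, if e ∈ S then (-1:ℝ) else 0) := by
    rw [Fintype.sum_sum_type]
    congr 1 <;> refine Finset.sum_congr rfl fun x _ => ?_ <;> simp only [Set.mem_setOf_eq, Sum.elim_inl, Sum.elim_inr, hexc] <;> split_ifs <;> simp_all
  have hμ2 : (∑ w : SubV V 𝓔,
        if w ∈ {w : SubV V 𝓔 | Sum.elim (· ∈ A) (· ∈ S) w} then Sum.elim μ (fun _ => 0) w else 0)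
      = ∑ v : V, if v ∈ A then μ v else 0 := by
    rw [Fintype.sum_sum_type]
    rw [Finset.sum_eq_zero (s := (Finset.univ : Finset {e // e ∈ 𝓔})) (fun x _ => by split_ifs <;> rfl), add_zero]
    refine Finset.sum_congr rfl fun x _ => ?_
    simp only [Set.mem_setOf_eq, Sum.elim_inl]
  have hδ : (∑ ed : SubE 𝓔,
        if (subS s t 𝓔 ed ∈ {w : SubV V 𝓔 | Sum.elim (· ∈ A) (· ∈ S) w}
              ∧ subT s t 𝓔 ed ∉ {w : SubV V 𝓔 | Sum.elim (· ∈ A) (· ∈ S) w})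
            ∨ (subS s t 𝓔 ed ∉ {w : SubV V 𝓔 | Sum.elim (· ∈ A) (· ∈ S) w}
              ∧ subT s t 𝓔 ed ∈ {w : SubV V 𝓔 | Sum.elim (· ∈ A) (· ∈ S) w}) then (1:ℝ) else 0)
      = (∑ e : {e // e ∉ 𝓔},
          if (s e.1 ∈ A ∧ t e.1 ∉ A) ∨ (s e.1 ∉ A ∧ t e.1 ∈ A) then (1:ℝ) else 0)
        + ∑ e : {e // e ∈ 𝓔},
            ((if (e ∈ S ∧ t e.1 ∉ A) ∨ (e ∉ S ∧ t e.1 ∈ A) then (1:ℝ) else 0)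
              + (if (s e.1 ∈ A ∧ e ∉ S) ∨ (s e.1 ∉ A ∧ e ∈ S) then (1:ℝ) else 0)) := by
    rw [Fintype.sum_sum_type, Fintype.sum_prod_type]
    simp only [Fintype.sum_bool]
    congr 1 <;> refine Finset.sum_congr rfl fun x _ => ?_
  have hs' : (∑ v : V, if v ∈ A then (Nat.card {e : {e // e ∈ 𝓔} // s e.1 = v} : ℝ) else 0)
      = ∑ e : {e // e ∈ 𝓔}, if s e.1 ∈ A then (1:ℝ) else 0 :=
    sum_card_fiber (fun e : {e // e ∈ 𝓔} => s e.1) A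
  have ht' : (∑ v : V, if v ∈ A then (Nat.card {e : {e // e ∈ 𝓔} // t e.1 = v} : ℝ) else 0)
      = ∑ e : {e // e ∈ 𝓔}, if t e.1 ∈ A then (1:ℝ) else 0 :=
    sum_card_fiber (fun e : {e // e ∈ 𝓔} => t e.1) A
  have hμ' : (∑ v : V, if v ∈ A then (μ v + (valIn s t 𝓔 v : ℝ) / 2) else 0)
      = (∑ v : V, if v ∈ A then μ v else 0)
        + ((∑ e : {e // e ∈ 𝓔}, if s e.1 ∈ A then (1:ℝ) else 0)
          + (∑ e : {e // e ∈ 𝓔}, if t e.1 ∈ A then (1:ℝ) else 0)) / 2 := by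
    have step : ∀ v, (if v ∈ A then (μ v + (valIn s t 𝓔 v : ℝ) / 2) else 0)
        = (if v ∈ A then μ v else 0)
          + ((if v ∈ A then (Nat.card {e : {e // e ∈ 𝓔} // s e.1 = v} : ℝ) else 0)
            + (if v ∈ A then (Nat.card {e : {e // e ∈ 𝓔} // t e.1 = v} : ℝ) else 0)) / 2 := by
      intro v
      by_cases h : v ∈ A
      · simp only [if_pos h, valIn]
        push_cast
        ring
      · simp [h]
    simp_rw [step]
    rw [Finset.sum_add_distrib, ← Finset.sum_div, Finset.sum_add_distrib, hs', ht']
  rw [hD, hμ2, hδ, hμ']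
  have key : (∑ e : {e // e ∈ 𝓔}, if e ∈ S then (-1:ℝ) else 0)
      + ((∑ e : {e // e ∈ 𝓔},
            ((if (e ∈ S ∧ t e.1 ∉ A) ∨ (e ∉ S ∧ t e.1 ∈ A) then (1:ℝ) else 0)
              + (if (s e.1 ∈ A ∧ e ∉ S) ∨ (s e.1 ∉ A ∧ e ∈ S) then (1:ℝ) else 0)))
          + ((∑ e : {e // e ∈ 𝓔}, if s e.1 ∈ A then (1:ℝ) else 0)
            + (∑ e : {e // e ∈ 𝓔}, if t e.1 ∈ A then (1:ℝ) else 0))) / 2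
      = ∑ e : {e // e ∈ 𝓔}, (if e ∈ S then 0
          else ((if s e.1 ∈ A then (1:ℝ) else 0) + (if t e.1 ∈ A then 1 else 0))) := by
    rw [← Finset.sum_add_distrib, ← Finset.sum_add_distrib, Finset.sum_div,
      ← Finset.sum_add_distrib]
    refine Finset.sum_congr rfl fun e _ => ?_
    by_cases hS : e ∈ S <;> by_cases hs1 : s e.1 ∈ A <;> by_cases ht1 : t e.1 ∈ A <;>
      simp [hS, hs1, ht1] <;> norm_num
  linarith [key]

/-! ### Totals -/

open Finset in
open Classical in
lemma delta_compl {V' F : Type} (s' t' : F → V') (A : Set V') :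
    edgeDelta s' t' Aᶜ = edgeDelta s' t' A := by
  rw [edgeDelta, edgeDelta]
  refine Nat.card_congr (Equiv.subtypeEquivRight fun e => ?_)
  simp only [Set.mem_compl_iff]
  tauto

open Finset in
open Classical in
lemma beta_compl {V' F : Type} [Fintype V'] [Fintype F] (s' t' : F → V') (D : V' → ℤ)
    (μ : V' → ℝ) {c : ℝ} (hD : (∑ v, (D v : ℝ)) = c) (hμ : (∑ v, μ v) = c) (A : Set V') :
    betaDiv s' t' D μ A + betaDiv s' t' D μ Aᶜ = (edgeDelta s' t' A : ℝ) := by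
  classical
  have hsplitf : ∀ f : V' → ℝ, (∑ᶠ v ∈ A, f v) + (∑ᶠ v ∈ Aᶜ, f v) = ∑ v, f v := by
    intro f
    rw [finsum_mem_set_eq, finsum_mem_set_eq, ← Finset.sum_add_distrib]
    exact Finset.sum_congr rfl fun v _ => by by_cases h : v ∈ A <;> simp [h]
  have h1 : (∑ᶠ v ∈ A, (D v : ℝ)) + (∑ᶠ v ∈ Aᶜ, (D v : ℝ)) = c := by
    rw [← hD]; exact hsplitf _
  have h2 : (∑ᶠ v ∈ A, μ v) + (∑ᶠ v ∈ Aᶜ, μ v) = c := by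
    rw [← hμ]; exact hsplitf μ
  have hdc : ((edgeDelta s' t' Aᶜ : ℕ) : ℝ) = ((edgeDelta s' t' A : ℕ) : ℝ) := by
    rw [delta_compl]
  simp only [betaDiv]
  linarith [h1, h2, hdc]

open Classical in
lemma graphConnected_iff {V' F : Type} (s' t' : F → V') :
    GraphConnected s' t' ↔ Nonempty V' ∧ ∀ a b : V', Relation.EqvGen (GraphStep s' t') a b := by
  unfold GraphConnected b0
  constructor
  · rintro ⟨hne, h1⟩
    refine ⟨hne, fun a b => ?_⟩
    rw [← Quot.eq]
    haveI := (Nat.card_eq_one_iff_unique.mp h1).1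
    exact Subsingleton.elim _ _
  · rintro ⟨hne, h⟩
    refine ⟨hne, Nat.card_eq_one_iff_unique.mpr ⟨⟨fun x y => ?_⟩, ⟨Quot.mk _ hne.some⟩⟩⟩
    induction x using Quot.ind with
    | _ a =>
      induction y using Quot.ind with
      | _ b => exact Quot.eq.mpr (h a b)

/-- Proposition 2.2(ii): a degree-`d` pseudo-divisor `(𝓔, D)` is `(v₀, μ^𝓔)`-quasistable
on the subdivision `Γ^𝓔` if and only if `𝓔` is nondisconnecting and `D|_V` is
`(v₀, μ_𝓔)`-quasistable on `Γ_𝓔 = (V, E∖𝓔)`, where `μ_𝓔(v) = μ(v) + val_𝓔(v)/2`. -/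
theorem pseudo_quasistable_iff (V E : Type) [Fintype V] [Fintype E] (s t : E → V)
    (hconn : GraphConnected s t) (v₀ : V) (μ : V → ℝ) (d : ℝ)
    (hμ : (∑ᶠ v, μ v) = d) (𝓔 : Finset E) (D : SubV V 𝓔 → ℤ)
    (hexc : ∀ w : {e // e ∈ 𝓔}, D (Sum.inr w) = -1)
    (hdeg : (∑ᶠ w, (D w : ℝ)) = d) :
    Quasistable (subS s t 𝓔) (subT s t 𝓔) (Sum.inl v₀) D (Sum.elim μ fun _ => 0) ↔
      (GraphConnected (fun e : {e // e ∉ 𝓔} => s e.1) (fun e : {e // e ∉ 𝓔} => t e.1) ∧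
       Quasistable (fun e : {e // e ∉ 𝓔} => s e.1) (fun e : {e // e ∉ 𝓔} => t e.1)
         v₀ (fun v => D (Sum.inl v)) (fun v => μ v + (valIn s t 𝓔 v : ℝ) / 2)) := by
  classical
  have hDtot : (∑ v : V, (D (Sum.inl v) : ℝ)) = d + 𝓔.card := by
    rw [finsum_eq_sum_of_fintype, Fintype.sum_sum_type] at hdeg
    have h2 : (∑ e : {e // e ∈ 𝓔}, (D (Sum.inr e) : ℝ)) = -(𝓔.card : ℝ) := by
      simp [hexc, Finset.card_univ]
    linarith [hdeg, h2]
  have hμtot : (∑ v : V, (μ v + (valIn s t 𝓔 v : ℝ) / 2)) = d + 𝓔.card := by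
    rw [finsum_eq_sum_of_fintype] at hμ
    have hval : (∑ v : V, (valIn s t 𝓔 v : ℝ)) = 2 * 𝓔.card := by
      have h1 := sum_card_fiber_total (fun e : {e // e ∈ 𝓔} => s e.1)
      have h2 := sum_card_fiber_total (fun e : {e // e ∈ 𝓔} => t e.1)
      have hsum : (∑ v : V, (valIn s t 𝓔 v : ℝ))
          = (∑ v : V, (Nat.card {e : {e // e ∈ 𝓔} // s e.1 = v} : ℝ))
            + ∑ v : V, (Nat.card {e : {e // e ∈ 𝓔} // t e.1 = v} : ℝ) := by
        rw [← Finset.sum_add_distrib]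
        refine Finset.sum_congr rfl fun v _ => ?_
        simp only [valIn]
        push_cast
        ring
      rw [hsum, h1, h2, Fintype.card_coe]
      ring
    rw [Finset.sum_add_distrib, ← Finset.sum_div, hval, hμ]
    ring
  constructor
  · intro hq
    have hqs : Quasistable (fun e : {e // e ∉ 𝓔} => s e.1) (fun e : {e // e ∉ 𝓔} => t e.1)
        v₀ (fun v => D (Sum.inl v)) (fun v => μ v + (valIn s t 𝓔 v : ℝ) / 2) := by
      intro A hA
      obtain ⟨v, hv⟩ := (Set.ne_univ_iff_exists_notMem _).mp hA
      obtain ⟨S, hSdef⟩ : ∃ S : Set {e // e ∈ 𝓔}, S = {e | s e.1 ∈ A ∨ t e.1 ∈ A} := ⟨_, rfl⟩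
      have hW : ({w : SubV V 𝓔 | Sum.elim (· ∈ A) (· ∈ S) w}) ≠ Set.univ := by
        intro h
        have hm : Sum.inl v ∈ {w : SubV V 𝓔 | Sum.elim (· ∈ A) (· ∈ S) w} :=
          h ▸ Set.mem_univ _
        exact hv hm
      have hsplit := beta_split s t 𝓔 D hexc μ A S
      have hz : (∑ e : {e // e ∈ 𝓔}, (if e ∈ S then (0:ℝ)
          else ((if s e.1 ∈ A then (1:ℝ) else 0) + (if t e.1 ∈ A then 1 else 0)))) = 0 := by
        refine Finset.sum_eq_zero fun e _ => ?_
        by_cases hS : e ∈ S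
        · simp [hS]
        · have hS' := hS
          rw [hSdef] at hS'
          have hs1 : s e.1 ∉ A := fun h => hS' (Or.inl h)
          have ht1 : t e.1 ∉ A := fun h => hS' (Or.inr h)
          simp [hS, hs1, ht1]
      obtain ⟨h1, h2⟩ := hq _ hW
      rw [hsplit, hz, add_zero] at h1 h2
      exact ⟨h1, fun hv₀ => h2 hv₀⟩
    refine ⟨?_, hqs⟩
    rw [graphConnected_iff]
    refine ⟨hconn.1, ?_⟩
    by_contra hcon
    push_neg at hcon
    obtain ⟨a, b, hab⟩ := hcon
    set R := GraphStep (fun e : {e // e ∉ 𝓔} => s e.1) (fun e : {e // e ∉ 𝓔} => t e.1) with hR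
    set A : Set V := {v | Relation.EqvGen R v₀ v} with hAdef
    have hv₀A : v₀ ∈ A := Relation.EqvGen.refl v₀
    have hAne : A ≠ Set.univ := by
      intro h
      have ha : a ∈ A := h ▸ Set.mem_univ _
      have hb : b ∈ A := h ▸ Set.mem_univ _
      exact hab (Relation.EqvGen.trans _ _ _ (Relation.EqvGen.symm _ _ ha) hb)
    have hAcne : Aᶜ ≠ Set.univ := by
      intro h
      have hm : v₀ ∈ Aᶜ := h ▸ Set.mem_univ _
      exact hm hv₀A
    have hδ : edgeDelta (fun e : {e // e ∉ 𝓔} => s e.1) (fun e : {e // e ∉ 𝓔} => t e.1) A = 0 := by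
      haveI : IsEmpty {e : {e // e ∉ 𝓔} //
          ((fun e : {e // e ∉ 𝓔} => s e.1) e ∈ A ∧ (fun e : {e // e ∉ 𝓔} => t e.1) e ∉ A)
          ∨ ((fun e : {e // e ∉ 𝓔} => s e.1) e ∉ A ∧ (fun e : {e // e ∉ 𝓔} => t e.1) e ∈ A)} := by
        constructor
        rintro ⟨e, he⟩
        have hstep : R (s e.1) (t e.1) := ⟨e, rfl, rfl⟩
        rcases he with ⟨h1, h2⟩ | ⟨h1, h2⟩
        · exact h2 (Relation.EqvGen.trans _ _ _ h1 (Relation.EqvGen.rel _ _ hstep))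
        · exact h1 (Relation.EqvGen.trans _ _ _ h2
            (Relation.EqvGen.symm _ _ (Relation.EqvGen.rel _ _ hstep)))
      rw [edgeDelta]
      exact Nat.card_of_isEmpty
    have hcompl := beta_compl (fun e : {e // e ∉ 𝓔} => s e.1) (fun e : {e // e ∉ 𝓔} => t e.1)
      (fun v => D (Sum.inl v)) (fun v => μ v + (valIn s t 𝓔 v : ℝ) / 2) hDtot hμtot A
    have hA0 := (hqs A hAne).2 hv₀A
    have hAc0 := (hqs Aᶜ hAcne).1
    rw [hδ] at hcompl
    norm_num at hcompl
    linarith [hA0, hAc0, hcompl]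
  · rintro ⟨-, hqs⟩
    intro W hW
    obtain ⟨A, hAdef⟩ : ∃ A : Set V, A = Sum.inl ⁻¹' W := ⟨_, rfl⟩
    obtain ⟨S, hSdef⟩ : ∃ S : Set {e // e ∈ 𝓔}, S = Sum.inr ⁻¹' W := ⟨_, rfl⟩
    have hWeq : W = {w : SubV V 𝓔 | Sum.elim (· ∈ A) (· ∈ S) w} := by
      rw [hAdef, hSdef]
      ext w
      cases w <;> exact Iff.rfl
    have hβ : betaDiv (subS s t 𝓔) (subT s t 𝓔) D (Sum.elim μ fun _ => 0) W
        = betaDiv (fun e : {e // e ∉ 𝓔} => s e.1) (fun e : {e // e ∉ 𝓔} => t e.1)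
            (fun v => D (Sum.inl v)) (fun v => μ v + (valIn s t 𝓔 v : ℝ) / 2) A
          + ∑ e : {e // e ∈ 𝓔}, (if e ∈ S then (0:ℝ)
              else ((if s e.1 ∈ A then (1:ℝ) else 0) + (if t e.1 ∈ A then 1 else 0))) := by
      conv_lhs => rw [hWeq]
      exact beta_split s t 𝓔 D hexc μ A S
    have hextra : (0:ℝ) ≤ ∑ e : {e // e ∈ 𝓔}, (if e ∈ S then (0:ℝ)
          else ((if s e.1 ∈ A then (1:ℝ) else 0) + (if t e.1 ∈ A then 1 else 0))) := by
      refine Finset.sum_nonneg fun e _ => ?_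
      by_cases hS : e ∈ S
      · simp [hS]
      · rw [if_neg hS]
        split_ifs <;> norm_num
    by_cases hA : A = Set.univ
    · have hS : S ≠ Set.univ := by
        intro h
        apply hW
        rw [hWeq, hA, h]
        ext w
        cases w <;> simp
      obtain ⟨e₀, he₀⟩ := (Set.ne_univ_iff_exists_notMem _).mp hS
      have hβuniv : betaDiv (fun e : {e // e ∉ 𝓔} => s e.1) (fun e : {e // e ∉ 𝓔} => t e.1)
          (fun v => D (Sum.inl v)) (fun v => μ v + (valIn s t 𝓔 v : ℝ) / 2) A = 0 := by
        rw [hA, betaDiv_eq]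
        simp
        have hDu : (∑ v : V, (D (Sum.inl v) : ℝ)) - (∑ v : V, (μ v + (valIn s t 𝓔 v : ℝ) / 2))
            = 0 := by
          rw [hDtot, hμtot]; ring
        linarith [hDu]
      have hterm : (2:ℝ) ≤ ∑ e : {e // e ∈ 𝓔}, (if e ∈ S then (0:ℝ)
            else ((if s e.1 ∈ A then (1:ℝ) else 0) + (if t e.1 ∈ A then 1 else 0))) := by
        have hnn : ∀ e : {e // e ∈ 𝓔}, (0:ℝ) ≤ (if e ∈ S then (0:ℝ)
            else ((if s e.1 ∈ A then (1:ℝ) else 0) + (if t e.1 ∈ A then 1 else 0))) := by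
          intro e
          by_cases hS : e ∈ S
          · simp [hS]
          · rw [if_neg hS]; split_ifs <;> norm_num
        have hle := Finset.single_le_sum (f := fun e : {e // e ∈ 𝓔} =>
          (if e ∈ S then (0:ℝ)
            else ((if s e.1 ∈ A then (1:ℝ) else 0) + (if t e.1 ∈ A then 1 else 0))))
          (fun e _ => hnn e) (Finset.mem_univ e₀)
        have hle' : (if e₀ ∈ S then (0:ℝ)
            else ((if s e₀.1 ∈ A then (1:ℝ) else 0) + (if t e₀.1 ∈ A then 1 else 0)))
            ≤ ∑ e : {e // e ∈ 𝓔}, (if e ∈ S then (0:ℝ)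
              else ((if s e.1 ∈ A then (1:ℝ) else 0) + (if t e.1 ∈ A then 1 else 0))) := hle
        have hs0 : s e₀.1 ∈ A := by rw [hA]; exact Set.mem_univ _
        have ht0 : t e₀.1 ∈ A := by rw [hA]; exact Set.mem_univ _
        rw [if_neg he₀, if_pos hs0, if_pos ht0] at hle'
        linarith [hle']
      constructor
      · rw [hβ, hβuniv]
        linarith [hterm]
      · intro _
        rw [hβ, hβuniv]
        linarith [hterm]
    · obtain ⟨h1, h2⟩ := hqs A hA
      constructor
      · rw [hβ]
        linarith [h1, hextra]
      · intro hv₀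
        have hv₀' : v₀ ∈ A := by rw [hAdef]; exact hv₀
        rw [hβ]
        linarith [h2 hv₀', hextra]

end
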